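/- Let R ∈ ℚ⟦X⟧ be a formal power series satisfying the functional equation R = X + 3XR + 2XR². Then (X + X² + 2X²·R)·(1 + R)² = R; equivalently, since 1 + R is invertible in ℚ⟦X⟧, the series P := R·(1+R)⁻² equals X + X² + 2X²R, so that P has coefficient 1 in degrees 1 and 2 and coefficient of Xⁿ equal to twice the coefficient of Xⁿ⁻² in R for every n ≥ 3. (This is the generating series identity showing that the dimensions of the codendriform primitives of the free tridendriform bialgebra on one generator are the big Schröder numbers.) -/

import Mathlib

open PowerSeries

/-- If `R ∈ ℚ⟦X⟧` satisfies `R = X + 3XR + 2XR²`, then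
`(X + X² + 2X²R)(1 + R)² = R`; equivalently `P := R(1 + R)⁻²` equals `X + X² + 2X²R`,
so `P` has coefficient `1` in degrees `1` and `2`, and for `n ≥ 3` its coefficient of
`Xⁿ` is twice the coefficient of `Xⁿ⁻²` in `R`. -/
theorem codendriform_primitives_series
    (R : PowerSeries ℚ) (hR : R = X + 3 * X * R + 2 * X * R ^ 2) :
    (X + X ^ 2 + 2 * X ^ 2 * R) * (1 + R) ^ 2 = R ∧
    R * ((1 + R)⁻¹) ^ 2 = X + X ^ 2 + 2 * X ^ 2 * R ∧
    coeff 1 (R * ((1 + R)⁻¹) ^ 2) = 1 ∧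
    coeff 2 (R * ((1 + R)⁻¹) ^ 2) = 1 ∧
    (∀ n : ℕ, 3 ≤ n →
      coeff n (R * ((1 + R)⁻¹) ^ 2) = 2 * coeff (n - 2) R) := by
  have hR0 : constantCoeff R = 0 := by
    rw [hR]; simp [map_add, map_mul]
  have hu : constantCoeff (1 + R) ≠ 0 := by
    simp [hR0]
  have hinv : (1 + R) * (1 + R)⁻¹ = 1 := PowerSeries.mul_inv_cancel _ hu
  have h1 : (X + X ^ 2 + 2 * X ^ 2 * R) * (1 + R) ^ 2 = R := by
    linear_combination (-(X * R) - 1 - X) * hR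
  have h2 : R * ((1 + R)⁻¹) ^ 2 = X + X ^ 2 + 2 * X ^ 2 * R := by
    nth_rewrite 1 [← h1]
    rw [mul_assoc, ← mul_pow, hinv, one_pow, mul_one]
  have hrw : (2 : ℚ⟦X⟧) * X ^ 2 * R = X * (X * (2 * R)) := by ring
  refine ⟨h1, h2, ?_, ?_, ?_⟩
  · rw [h2, hrw, map_add, map_add]
    have : (1 : ℕ) = 0 + 1 := rfl
    rw [show (coeff 1) (X * (X * (2 * R))) = coeff (0 + 1) (X * (X * (2 * R))) from rfl, coeff_succ_X_mul, coeff_X, coeff_X_pow]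
    simp [hR0]
  · rw [h2, hrw, map_add, map_add]
    have : (2 : ℕ) = 1 + 1 := rfl
    rw [this, coeff_succ_X_mul, coeff_succ_X_mul, coeff_X, coeff_X_pow]
    simp [hR0]
  · intro n hn
    rw [h2]
    obtain ⟨m, rfl⟩ : ∃ m, n = m + 2 := ⟨n - 2, by omega⟩
    have hx : coeff (m + 2) ((2 : ℚ⟦X⟧) * X ^ 2 * R) = 2 * coeff m R := by
      rw [hrw, show m + 2 = (m + 1) + 1 from rfl, coeff_succ_X_mul, coeff_succ_X_mul, two_mul, map_add, ← two_mul]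
    rw [map_add, map_add, hx, coeff_X, if_neg (by omega), coeff_X_pow, if_neg (by omega)]
    simp
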